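/- The radius 1 − √(2/3) cannot be improved in the derivative comparison theorem: for every r with 1 − √(2/3) < r < 1 there exist analytic functions f, g on the open unit disk D such that g is subordinate to f, |g(z)| ≤ |f(z)| for all z ∈ D, f(0) = 0, and M_{g'}(r) > M_{f'}(r). (One may take f(z) = z and g(z) = ξ_a(z) := z(z−a)/(1−az) with a ∈ [0,1) close to 1.) -/

import Mathlib

open Metric

/-- The majorant series `M_F(r) = ∑ |A_n| r^n` of an analytic function
`F(z) = ∑ A_n z^n` on the unit disk, where `A_n = F⁽ⁿ⁾(0)/n!`. -/
noncomputable def majorant (F : ℂ → ℂ) (r : ℝ) : ℝ :=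
  ∑' n : ℕ, ‖iteratedDeriv n F 0 / n.factorial‖ * r ^ n

open FormalMultilinearSeries

noncomputable def xiCoeff (a : ℝ) : ℕ → ℂ
  | 0 => 0
  | 1 => -(a : ℂ)
  | (n + 2) => (1 - (a : ℂ) ^ 2) * (a : ℂ) ^ n

lemma iteratedDeriv_const_succ (n : ℕ) (c : ℂ) :
    iteratedDeriv (n + 1) (fun _ : ℂ => c) = fun _ => 0 := by
  induction n with
  | zero => rw [iteratedDeriv_one]; exact deriv_const' c
  | succ n ih => rw [iteratedDeriv_succ, ih]; exact deriv_const' 0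

lemma norm_xiCoeff_one (a : ℝ) (ha0 : 0 ≤ a) : ‖xiCoeff a 1‖ = a := by
  simp [xiCoeff, abs_of_nonneg ha0]

lemma norm_xiCoeff_two (a : ℝ) (ha0 : 0 ≤ a) (ha1 : a ≤ 1) (n : ℕ) :
    ‖xiCoeff a (n + 2)‖ = (1 - a ^ 2) * a ^ n := by
  have h1 : (1 - (a : ℂ) ^ 2) = ((1 - a ^ 2 : ℝ) : ℂ) := by push_cast; ring
  rw [xiCoeff, h1, ← Complex.ofReal_pow, ← Complex.ofReal_mul, Complex.norm_real]
  rw [Real.norm_eq_abs, abs_of_nonneg (mul_nonneg (by nlinarith) (pow_nonneg ha0 n))]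

lemma norm_xiCoeff_le (a : ℝ) (ha0 : 0 ≤ a) (ha1 : a ≤ 1) (n : ℕ) :
    ‖xiCoeff a n‖ ≤ 1 := by
  match n with
  | 0 => simp [xiCoeff]
  | 1 => rw [norm_xiCoeff_one a ha0]; exact ha1
  | (n + 2) =>
    rw [norm_xiCoeff_two a ha0 ha1 n]
    have := pow_le_one₀ ha0 ha1 (n := n)
    nlinarith [pow_nonneg ha0 n]

lemma xi_construction (a r : ℝ) (ha0 : 0 < a) (ha1 : a < 1) (hr0 : 0 < r) (hr1 : r < 1) :
    ∃ g : ℂ → ℂ, AnalyticOnNhd ℂ g (ball 0 1) ∧ g 0 = 0 ∧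
      (∀ z ∈ ball (0 : ℂ) 1, ‖g z‖ ≤ ‖z‖) ∧
      majorant (deriv g) r
        = (1 - a ^ 2) * r * (a * r / (1 - a * r) ^ 2 + 2 * (1 - a * r)⁻¹) + a := by
  set p : FormalMultilinearSeries ℂ ℂ ℂ := FormalMultilinearSeries.ofScalars ℂ (xiCoeff a)
    with hp
  have hrad : (1 : ENNReal) ≤ p.radius := by
    have : ((1 : NNReal) : ENNReal) ≤ p.radius := by
      apply p.le_radius_of_bound 1
      intro n
      rw [ofScalars_norm]
      simpa using norm_xiCoeff_le a ha0.le ha1.le n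
    simpa using this
  have hball : HasFPowerSeriesOnBall p.sum p 0 1 :=
    (p.hasFPowerSeriesOnBall (lt_of_lt_of_le zero_lt_one hrad)).mono zero_lt_one hrad
  have hsum : ∀ z : ℂ, ‖z‖ < 1 → p.sum z = z * ((z : ℂ) - a) / (1 - a * z) := by
    intro z hz
    have hna : ‖(a : ℂ)‖ = a := by
      rw [Complex.norm_real, Real.norm_eq_abs, abs_of_nonneg ha0.le]
    have haz : ‖(a : ℂ) * z‖ < 1 := by
      rw [norm_mul, hna]
      nlinarith [norm_nonneg z]
    have hne : (1 : ℂ) - a * z ≠ 0 := by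
      intro h
      have h2 : (a : ℂ) * z = 1 := by linear_combination -h
      rw [h2, norm_one] at haz
      exact lt_irrefl 1 haz
    have hgeo := (hasSum_geometric_of_norm_lt_one haz).mul_left ((1 - (a : ℂ) ^ 2) * z ^ 2)
    have h2 : HasSum (fun n : ℕ => xiCoeff a (n + 2) * z ^ (n + 2))
        ((1 - (a : ℂ) ^ 2) * z ^ 2 * (1 - a * z)⁻¹) := by
      convert hgeo using 2 with n
      case e'_3 => rfl
      rw [xiCoeff, mul_pow]
      ring
    have h3 := (hasSum_nat_add_iff (f := fun n : ℕ => xiCoeff a n * z ^ n) 2).mp h2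
    have hval : p.sum z = ∑' n : ℕ, xiCoeff a n * z ^ n := by
      unfold FormalMultilinearSeries.sum
      congr 1
      funext n
      rw [hp, ofScalars_apply_eq, smul_eq_mul]
    rw [hval, h3.tsum_eq]
    have hrange : (∑ i ∈ Finset.range 2, xiCoeff a i * z ^ i) = -(a : ℂ) * z := by
      simp [Finset.sum_range_succ, xiCoeff]
    rw [hrange]
    field_simp
    ring
  refine ⟨p.sum, ?_, ?_, ?_, ?_⟩
  · have h := hball.analyticOnNhd
    have he : Metric.eball (0 : ℂ) 1 = ball (0 : ℂ) 1 := by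
      rw [show (1 : ENNReal) = ((1 : NNReal) : ENNReal) from rfl, Metric.emetric_ball_nnreal]
      norm_num
    rwa [he] at h
  · rw [hsum 0 (by norm_num)]; simp
  · intro z hz
    rw [mem_ball_zero_iff] at hz
    rw [hsum z hz]
    have hna : ‖(a : ℂ)‖ = a := by
      rw [Complex.norm_real, Real.norm_eq_abs, abs_of_nonneg ha0.le]
    have hne : (1 : ℂ) - a * z ≠ 0 := by
      intro h
      have h2 : (a : ℂ) * z = 1 := by linear_combination -h
      have : ‖(a : ℂ) * z‖ < 1 := by rw [norm_mul, hna]; nlinarith [norm_nonneg z]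
      rw [h2, norm_one] at this
      exact lt_irrefl 1 this
    have hre : z.re ^ 2 + z.im ^ 2 < 1 := by
      have : ‖z‖ ^ 2 < 1 := by nlinarith [norm_nonneg z]
      rwa [Complex.sq_norm, Complex.normSq_apply, ← pow_two, ← pow_two]
        at this
    have hsq : ‖z - (a : ℂ)‖ ^ 2 ≤ ‖1 - (a : ℂ) * z‖ ^ 2 := by
      have e1 : ‖z - (a : ℂ)‖ ^ 2 = (z.re - a) ^ 2 + z.im ^ 2 := by
        rw [Complex.sq_norm, Complex.normSq_apply]
        simp
        ring
      have e2 : ‖1 - (a : ℂ) * z‖ ^ 2 = (1 - a * z.re) ^ 2 + (a * z.im) ^ 2 := by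
        rw [Complex.sq_norm, Complex.normSq_apply]
        simp
        ring
      rw [e1, e2]
      nlinarith [mul_nonneg (show (0:ℝ) ≤ 1 - a ^ 2 by nlinarith)
        (show (0:ℝ) ≤ 1 - (z.re ^ 2 + z.im ^ 2) by nlinarith)]
    have hkey : ‖z - (a : ℂ)‖ ≤ ‖1 - (a : ℂ) * z‖ := by
      nlinarith [norm_nonneg (z - (a : ℂ)), norm_nonneg (1 - (a : ℂ) * z)]
    have hpos : 0 < ‖1 - (a : ℂ) * z‖ := norm_pos_iff.mpr hne
    rw [norm_div, norm_mul, div_le_iff₀ hpos]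
    calc ‖z‖ * ‖z - (a : ℂ)‖ ≤ ‖z‖ * ‖1 - (a : ℂ) * z‖ :=
          mul_le_mul_of_nonneg_left hkey (norm_nonneg z)
      _ = ‖z‖ * ‖1 - (a : ℂ) * z‖ := rfl
  · have hco : ∀ n : ℕ, iteratedDeriv n p.sum 0 = (n.factorial : ℂ) * xiCoeff a n := by
      intro n
      have h := hball.factorial_smul (1 : ℂ) n
      rw [iteratedDeriv_eq_iteratedFDeriv, ← h, hp, ofScalars_apply_eq]
      simp [smul_eq_mul]
    set u : ℕ → ℝ := fun n => ((n : ℝ) + 1) * ‖xiCoeff a (n + 1)‖ * r ^ n with hu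
    have hterm : ∀ n : ℕ, ‖iteratedDeriv n (deriv p.sum) 0 / (n.factorial : ℂ)‖ * r ^ n
        = u n := by
      intro n
      have h1 : iteratedDeriv n (deriv p.sum) 0 = iteratedDeriv (n + 1) p.sum 0 := by
        rw [← iteratedDeriv_succ']
      rw [h1, hco (n + 1)]
      have hne : ((n.factorial : ℂ)) ≠ 0 := Nat.cast_ne_zero.mpr n.factorial_ne_zero
      have h2 : (((n + 1).factorial : ℂ)) * xiCoeff a (n + 1) / (n.factorial : ℂ)
          = ((n : ℂ) + 1) * xiCoeff a (n + 1) := by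
        rw [Nat.factorial_succ]
        push_cast
        field_simp
      rw [h2, norm_mul]
      have h3 : ‖((n : ℂ) + 1)‖ = (n : ℝ) + 1 := by
        rw [show ((n : ℂ) + 1) = (((n + 1 : ℕ)) : ℂ) by push_cast; ring, Complex.norm_natCast]
        push_cast
        ring
      rw [h3]
    have har : a * r < 1 := by nlinarith
    have har0 : 0 ≤ a * r := by positivity
    have h1 := hasSum_coe_mul_geometric_of_norm_lt_one (𝕜 := ℝ) (r := a * r)
      (by rw [Real.norm_eq_abs, abs_of_nonneg har0]; exact har)
    have h2 := hasSum_geometric_of_lt_one har0 har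
    have h3 := (h1.add (h2.mul_left 2)).mul_left ((1 - a ^ 2) * r)
    have h4 : HasSum (fun n => u (n + 1))
        ((1 - a ^ 2) * r * (a * r / (1 - a * r) ^ 2 + 2 * (1 - a * r)⁻¹)) := by
      convert h3 using 2 with n
      case e'_3 => rfl
      rw [hu]
      simp only
      rw [norm_xiCoeff_two a ha0.le ha1.le n, mul_pow]
      push_cast
      ring
    have h5 := (hasSum_nat_add_iff (f := u) 1).mp h4
    have hu0 : (∑ i ∈ Finset.range 1, u i) = a := by
      rw [Finset.sum_range_one, hu]
      simp only [Nat.cast_zero, zero_add, pow_zero, one_mul, mul_one]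
      exact norm_xiCoeff_one a ha0.le
    rw [hu0] at h5
    unfold majorant
    rw [tsum_congr hterm]
    exact h5.tsum_eq

/-- `g` is subordinate to `f` on the unit disk: `g = f ∘ φ` for some analytic
self-map `φ` of the unit disk with `φ 0 = 0`. -/
def Subordinate (g f : ℂ → ℂ) : Prop :=
  ∃ φ : ℂ → ℂ, AnalyticOnNhd ℂ φ (ball 0 1) ∧ φ 0 = 0 ∧
    Set.MapsTo φ (ball 0 1) (ball 0 1) ∧ Set.EqOn g (f ∘ φ) (ball 0 1)

/-- The radius `1 - √(2/3)` cannot be improved in the derivative comparison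
theorem. -/
theorem majorant_deriv_comparison_radius_sharp :
    ∀ r : ℝ, 1 - Real.sqrt (2 / 3) < r → r < 1 →
      ∃ f g : ℂ → ℂ, AnalyticOnNhd ℂ f (ball 0 1) ∧
        AnalyticOnNhd ℂ g (ball 0 1) ∧
        Subordinate g f ∧
        (∀ z ∈ ball (0 : ℂ) 1, ‖g z‖ ≤ ‖f z‖) ∧
        f 0 = 0 ∧
        majorant (deriv f) r < majorant (deriv g) r := by
  intro r hr1 hr2
  have hsq : Real.sqrt (2 / 3) < 1 := by
    rw [show (1 : ℝ) = Real.sqrt 1 by simp]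
    exact Real.sqrt_lt_sqrt (by norm_num) (by norm_num)
  have hr0 : 0 < r := by linarith
  have hsq2 : (1 - r) ^ 2 < 2 / 3 := by
    have h2 : 1 - r < Real.sqrt (2 / 3) := by linarith
    nlinarith [Real.sq_sqrt (show (0:ℝ) ≤ 2/3 by norm_num), Real.sqrt_nonneg (2/3 : ℝ)]
  set ε : ℝ := 6 * r - 3 * r ^ 2 - 1 with hε
  have hε0 : 0 < ε := by nlinarith
  have hε2 : ε ≤ 2 := by nlinarith [sq_nonneg (1 - r)]
  set a : ℝ := 1 - ε / 18 with ha
  have ha0 : 0 < a := by rw [ha]; nlinarith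
  have ha1 : a < 1 := by rw [ha]; nlinarith
  have hrel : 6 * r - 3 * r ^ 2 - 1 = 18 * (1 - a) := by rw [ha, hε]; ring
  clear_value ε a
  obtain ⟨g, hg_an, hg0, hg_le, hg_maj⟩ := xi_construction a r ha0 ha1 hr0 hr2
  refine ⟨fun z => z, g, analyticOnNhd_id, hg_an,
    ⟨g, hg_an, hg0, ?_, fun z _ => rfl⟩, fun z hz => hg_le z hz, rfl, ?_⟩
  · intro z hz
    rw [mem_ball_zero_iff]
    exact lt_of_le_of_lt (hg_le z hz) (mem_ball_zero_iff.mp hz)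
  · have hid : majorant (deriv (fun z : ℂ => z)) r = 1 := by
      rw [deriv_id'']
      unfold majorant
      rw [tsum_eq_single 0 ?_]
      · simp
      · intro n hn
        obtain ⟨m, rfl⟩ := Nat.exists_eq_succ_of_ne_zero hn
        rw [iteratedDeriv_const_succ]
        simp
    rw [hid, hg_maj]
    have h1x : 0 < 1 - a * r := by nlinarith
    have hx2 : (0:ℝ) < (1 - a * r) ^ 2 := by positivity
    have expand : (1 - a ^ 2) * r * (a * r / (1 - a * r) ^ 2 + 2 * (1 - a * r)⁻¹)
        = (1 - a ^ 2) * r * (2 - a * r) / (1 - a * r) ^ 2 := by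
      field_simp
      ring
    rw [expand, ← sub_lt_iff_lt_add, lt_div_iff₀ hx2]
    have h1a : 0 < 1 - a := by linarith
    have hkey : (1 - a * r) ^ 2 < (1 + a) * r * (2 - a * r) := by
      nlinarith [mul_nonneg h1a.le
        (show (0:ℝ) ≤ 4 - (4 * r - r ^ 2 - 2 * r ^ 2 * (1 + a)) by
          nlinarith [sq_nonneg r, mul_pos ha0 (mul_pos hr0 hr0)]), hrel, h1a]
    calc (1 - a) * (1 - a * r) ^ 2 < (1 - a) * ((1 + a) * r * (2 - a * r)) :=
          mul_lt_mul_of_pos_left hkey h1a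
      _ = (1 - a ^ 2) * r * (2 - a * r) := by ring
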